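/- Let H be a bipartite graph with a bipartition (A,B). Let G be a graph, let 𝔱 = (T,β) be a tight tree decomposition of G, and let x ∈ V(T) be such that there is an induced H-model (X_v : v ∈ V(H)) in the torso 𝔱_x with |V(X_a)| = 1 for all a ∈ A. Then G has an induced minor isomorphic to H. -/

import Mathlib

/-- The induced subgraph of `G` on `S` is nonempty and connected, expressed via
walks of `G` staying inside `S`. -/
def ConnectedIn {V : Type*} (G : SimpleGraph V) (S : Set V) : Prop :=
  S.Nonempty ∧ ∀ a ∈ S, ∀ b ∈ S, ∃ w : G.Walk a b, ∀ v ∈ w.support, v ∈ S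

/-- An induced `H`-model in `G`: pairwise disjoint nonempty connected branch sets,
joined by an edge iff the corresponding vertices of `H` are adjacent. -/
def IsInducedModel {W V : Type*} (H : SimpleGraph W) (G : SimpleGraph V) (X : W → Set V) : Prop :=
  (∀ w, ConnectedIn G (X w)) ∧
  (∀ w w', w ≠ w' → Disjoint (X w) (X w')) ∧
  (∀ w w', H.Adj w w' → ∃ a ∈ X w, ∃ b ∈ X w', G.Adj a b) ∧
  (∀ w w', w ≠ w' → ¬ H.Adj w w' → ∀ a ∈ X w, ∀ b ∈ X w', ¬ G.Adj a b)

/-- `G` has an induced minor isomorphic to `H`. -/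
def InducedMinor {W V : Type*} (H : SimpleGraph W) (G : SimpleGraph V) : Prop :=
  ∃ X : W → Set V, IsInducedModel H G X

/-- An `H`-model in `G` (for the minor relation). -/
def IsMinorModel {W V : Type*} (H : SimpleGraph W) (G : SimpleGraph V) (X : W → Set V) : Prop :=
  (∀ w, ConnectedIn G (X w)) ∧
  (∀ w w', w ≠ w' → Disjoint (X w) (X w')) ∧
  (∀ w w', H.Adj w w' → ∃ a ∈ X w, ∃ b ∈ X w', G.Adj a b)

/-- `G` has a minor isomorphic to `H`. -/
def HasMinor {W V : Type*} (H : SimpleGraph W) (G : SimpleGraph V) : Prop :=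
  ∃ X : W → Set V, IsMinorModel H G X

/-- `(T, β)` is a tree decomposition of `G`. -/
structure IsTreeDecomp {V ι : Type*} (G : SimpleGraph V) (T : SimpleGraph ι)
    (β : ι → Finset V) : Prop where
  tree : T.IsTree
  bags_connected : ∀ v : V, ConnectedIn T {i | v ∈ β i}
  edges_covered : ∀ u v : V, G.Adj u v → ∃ i, u ∈ β i ∧ v ∈ β i

/-- `G` has a tree decomposition of width at most `w`. -/
def TreewidthLE {V : Type*} (G : SimpleGraph V) (w : ℕ) : Prop :=
  ∃ (n : ℕ) (T : SimpleGraph (Fin n)) (β : Fin n → Finset V),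
    IsTreeDecomp G T β ∧ ∀ i, (β i).card ≤ w + 1

noncomputable def treewidth {V : Type*} (G : SimpleGraph V) : ℕ :=
  sInf {w | TreewidthLE G w}

/-- `G` has a path decomposition of width at most `w`. -/
def PathwidthLE {V : Type*} (G : SimpleGraph V) (w : ℕ) : Prop :=
  ∃ (n : ℕ) (β : Fin n → Finset V),
    IsTreeDecomp G (SimpleGraph.pathGraph n) β ∧ ∀ i, (β i).card ≤ w + 1

noncomputable def pathwidth {V : Type*} (G : SimpleGraph V) : ℕ :=
  sInf {w | PathwidthLE G w}

/-- A hereditary class of finite graphs (each finite graph is represented, up to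
isomorphism, on some `Fin n`): the class is closed under induced subgraphs,
i.e. under pulling back along injections. -/
def Hereditary (𝒢 : ∀ n : ℕ, SimpleGraph (Fin n) → Prop) : Prop :=
  ∀ (n m : ℕ) (G : SimpleGraph (Fin n)) (f : Fin m ↪ Fin n),
    𝒢 n G → 𝒢 m (G.comap ⇑f)

/-- A graph `J` is `ζ`-jagged if every induced subgraph with pathwidth at least 3
has at least `ζ` vertices of degree two (in that induced subgraph). -/
def Jagged {V : Type*} (ζ : ℕ) (J : SimpleGraph V) : Prop :=
  ∀ s : Set V, 3 ≤ pathwidth (J.induce s) →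
    ζ ≤ {v | v ∈ s ∧ ({w | w ∈ s ∧ J.Adj v w}).ncard = 2}.ncard

/-- A graph is `d`-degenerate if every nonempty induced subgraph has a vertex of
degree at most `d`. -/
def Degenerate {V : Type*} (d : ℕ) (G : SimpleGraph V) : Prop :=
  ∀ s : Set V, s.Nonempty → ∃ v ∈ s, ({w | w ∈ s ∧ G.Adj v w}).ncard ≤ d

/-- The complete binary tree of radius `ρ`: vertices are binary strings of length
at most `ρ`, and `x` is adjacent to `b :: x` (its children). -/
def binTree (ρ : ℕ) : SimpleGraph {l : List Bool // l.length ≤ ρ} where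
  Adj x y := (∃ b : Bool, (x : List Bool) = b :: (y : List Bool)) ∨
             (∃ b : Bool, (y : List Bool) = b :: (x : List Bool))
  symm := by constructor; rintro x y (h | h); exact Or.inr h; exact Or.inl h
  loopless := by
    constructor
    rintro x (⟨b, hb⟩ | ⟨b, hb⟩) <;>
      · have := congrArg List.length hb
        simp at this

/-- The `n × n` square grid graph. -/
def gridGraph (n : ℕ) : SimpleGraph (Fin n × Fin n) where
  Adj p q := (p.1 = q.1 ∧ ((p.2 : ℕ) + 1 = (q.2 : ℕ) ∨ (q.2 : ℕ) + 1 = (p.2 : ℕ))) ∨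
             (p.2 = q.2 ∧ ((p.1 : ℕ) + 1 = (q.1 : ℕ) ∨ (q.1 : ℕ) + 1 = (p.1 : ℕ)))
  symm := by
    constructor
    rintro p q (⟨h1, h2⟩ | ⟨h1, h2⟩)
    · exact Or.inl ⟨h1.symm, h2.symm⟩
    · exact Or.inr ⟨h1.symm, h2.symm⟩
  loopless := by constructor; rintro p (⟨_, h | h⟩ | ⟨_, h | h⟩) <;> omega

/-- A graph is planar iff it is isomorphic to a minor of some square grid. -/
def IsPlanar {W : Type*} (H : SimpleGraph W) : Prop :=
  ∃ n : ℕ, HasMinor H (gridGraph n)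

/-- `S` is the vertex set of an induced path in `G` from `x` to `y`. -/
def IsInducedPathSet {V : Type*} (G : SimpleGraph V) (S : Set V) (x y : V) : Prop :=
  ∃ p : G.Walk x y, p.IsPath ∧ {v | v ∈ p.support} = S ∧
    ∀ u v : V, u ∈ p.support → v ∈ p.support → G.Adj u v → p.toSubgraph.Adj u v

/-- `G` has a stable strong `(κ, lam)`-block: a stable set `B` of at least `κ`
vertices together with, for each unordered pair of distinct vertices of `B`,
at least `lam` pairwise internally disjoint induced paths joining them, such that
path systems of distinct pairs meet exactly in the shared endpoints. -/
def HasStableStrongBlock {V : Type*} (G : SimpleGraph V) (κ lam : ℕ) : Prop :=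
  ∃ (B : Set V) (P : V → V → Fin lam → Set V),
    κ ≤ B.ncard ∧
    (∀ x ∈ B, ∀ y ∈ B, x ≠ y → ¬ G.Adj x y) ∧
    (∀ x ∈ B, ∀ y ∈ B, x ≠ y →
      (∀ i, IsInducedPathSet G (P x y i) x y) ∧
      (∀ i j, i ≠ j → ∀ v, v ∈ P x y i → v ∈ P x y j → v = x ∨ v = y) ∧
      (∀ i, P x y i = P y x i)) ∧
    (∀ x ∈ B, ∀ y ∈ B, ∀ x' ∈ B, ∀ y' ∈ B, x ≠ y → x' ≠ y' →
      ({x, y} : Set V) ≠ {x', y'} →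
      (⋃ i, P x y i) ∩ (⋃ i, P x' y' i) = (({x, y} : Set V) ∩ {x', y'}))

/-- `G` is `(κ, lam)`-separable: there is no stable strong `(κ, lam)`-block in `G`. -/
def Separable {V : Type*} (G : SimpleGraph V) (κ lam : ℕ) : Prop :=
  ¬ HasStableStrongBlock G κ lam

/-- In the tree `T` rooted at `u`, `w` is a child of `v`. -/
def IsChild {α : Type*} (T : SimpleGraph α) (u v w : α) : Prop :=
  T.Adj v w ∧ T.dist u w = T.dist u v + 1

/-- `(T, u)` is a `(δ, ρ)`-regular rooted tree: `T` is a tree, every vertex is at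
distance at most `ρ` from `u`, and every vertex at distance less than `ρ` from `u`
has exactly `δ` children. -/
def RootedRegular {α : Type*} (T : SimpleGraph α) (u : α) (δ ρ : ℕ) : Prop :=
  T.IsTree ∧ (∀ v, T.dist u v ≤ ρ) ∧
    ∀ v, T.dist u v < ρ → {w | IsChild T u v w}.ncard = δ

/-- The rooted tree induced by `T` on `s`, with root `r`, is a rooted subtree of
`(T, u)`: it is a tree and every child relation in it is a child relation in `(T, u)`. -/
def IsRootedSubtree {α : Type*} (T : SimpleGraph α) (u : α) (s : Set α) (r : ↥s) : Prop :=
  (T.induce s).IsTree ∧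
    ∀ v w : ↥s, IsChild (T.induce s) r v w → IsChild T u (↑v) (↑w)

open Classical in
/-- The `i`-ancestor of `v` in the tree `T` rooted at `u`: the vertex on the unique
`u`–`v` path at distance `i` from `v`. -/
noncomputable def ancestor {α : Type*} (T : SimpleGraph α) (u v : α) (i : ℕ) : α :=
  if h : ∃ w, T.dist u w + i = T.dist u v ∧ T.dist w v = i then h.choose else v

/-- The rooted tree `T` (mapped into `G` by `f`) is path-uniform in `G`. -/
def PathUniform {V β : Type*} (G : SimpleGraph V) (f : β → V) (T : SimpleGraph β)
    (r : β) (ρ : ℕ) : Prop :=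
  ∀ v v' : β, T.dist r v = ρ → T.dist r v' = ρ → ∀ i j : ℕ, i ≤ ρ → j ≤ ρ →
    (G.Adj (f (ancestor T r v i)) (f (ancestor T r v j)) ↔
      G.Adj (f (ancestor T r v' i)) (f (ancestor T r v' j)))

/-- The rooted tree `T` (mapped into `G` by `f`) is path-induced in `G`. -/
def PathInduced {V β : Type*} (G : SimpleGraph V) (f : β → V) (T : SimpleGraph β)
    (r : β) (ρ : ℕ) : Prop :=
  ∀ v : β, T.dist r v = ρ → ∀ i j : ℕ, i ≤ ρ → j ≤ ρ →
    (G.Adj (f (ancestor T r v i)) (f (ancestor T r v j)) ↔ (i + 1 = j ∨ j + 1 = i))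

/-- The rooted tree `T` (mapped into `G` by `f`) is branch-induced in `G`: every
`G`-edge between vertices of `T` that is not a `T`-edge joins a vertex to one of
its ancestors. -/
def BranchInduced {V β : Type*} (G : SimpleGraph V) (f : β → V) (T : SimpleGraph β)
    (r : β) : Prop :=
  ∀ v w : β, G.Adj (f v) (f w) → ¬ T.Adj v w →
    (T.dist r v + T.dist v w = T.dist r w ∨ T.dist r w + T.dist w v = T.dist r v)

/-- `G` has a (not necessarily induced) subgraph isomorphic to `H`. -/
def HasSubgraphIso {W V : Type*} (H : SimpleGraph W) (G : SimpleGraph V) : Prop :=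
  ∃ f : W → V, Function.Injective f ∧ ∀ a b, H.Adj a b → G.Adj (f a) (f b)

/-- The spanning subgraph of `G` consisting of the edges of color `i` under the
edge-coloring `F`. -/
def colorSub {V : Type*} {c : ℕ} (G : SimpleGraph V) (F : V → V → Fin c) (i : Fin c) :
    SimpleGraph V where
  Adj u v := G.Adj u v ∧ F u v = i ∧ F v u = i
  symm := by constructor; rintro u v ⟨h1, h2, h3⟩; exact ⟨h1.symm, h3, h2⟩
  loopless := by constructor; rintro u ⟨h, _, _⟩; exact G.loopless.irrefl u h

/-- Distance from `a` to `b` within the induced subgraph `G[S]` (via walks of `G`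
all of whose vertices lie in `S`). -/
noncomputable def distIn {V : Type*} (G : SimpleGraph V) (S : Set V) (a b : V) : ℕ :=
  sInf {n | ∃ w : G.Walk a b, w.length = n ∧ ∀ v ∈ w.support, v ∈ S}

/-- `(a 0, …, a (σ+1))` is a `(σ, θ)`-`X`-abyss in `G`. -/
def IsAbyss {V : Type*} (G : SimpleGraph V) (X : Set V) (σ θ : ℕ) (a : ℕ → V) : Prop :=
  ∃ (S : ℕ → Set V) (ρ : ℕ → ℕ),
    S 0 ⊆ X ∧ ConnectedIn G (S 0) ∧ (∀ k ≤ σ + 1, a k ∈ S 0) ∧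
    (∀ i < σ,
      S (i + 1) ⊆ {v | v ∈ S i ∧ distIn G (S i) (a i) v = ρ i + 1} ∧
      ConnectedIn G (S (i + 1)) ∧
      ∀ k, i + 1 ≤ k → k ≤ σ + 1 → a k ∈ S (i + 1)) ∧
    θ ≤ G.dist (a σ) (a (σ + 1))

/-- The torso of a tree decomposition `(T, β)` of `G` at the node `x`. -/
def torso {V ι : Type*} (G : SimpleGraph V) (T : SimpleGraph ι) (β : ι → Finset V)
    (x : ι) : SimpleGraph {v : V // v ∈ β x} where
  Adj u v := u ≠ v ∧ (G.Adj ↑u ↑v ∨ ∃ y, T.Adj x y ∧ ↑u ∈ β y ∧ ↑v ∈ β y)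
  symm := by
    constructor
    rintro u v ⟨hne, h | ⟨y, hy, h1, h2⟩⟩
    · exact ⟨hne.symm, Or.inl h.symm⟩
    · exact ⟨hne.symm, Or.inr ⟨y, hy, h2, h1⟩⟩
  loopless := by constructor; rintro u ⟨hne, _⟩; exact hne rfl

/-- The vertex set of the component of `T - x` containing `y` (denoted `T_{y∖x}`). -/
def compAway {ι : Type*} (T : SimpleGraph ι) (y x : ι) : Set ι :=
  {z | ∃ w : T.Walk y z, x ∉ w.support}

/-- A tree decomposition `(T, β)` of `G` is tight. -/
def Tight {V ι : Type*} (G : SimpleGraph V) (T : SimpleGraph ι) (β : ι → Finset V) : Prop :=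
  ∀ x y, T.Adj x y →
    ∃ v₀ ∈ (⋃ z ∈ compAway T y x, (β z : Set V)) \ (⋃ z ∈ compAway T x y, (β z : Set V)),
      ∀ u : V, u ∈ β x → u ∈ β y →
        ∃ c : V, G.Adj u c ∧ ∃ w : G.Walk v₀ c, ∀ p ∈ w.support,
          p ∈ (⋃ z ∈ compAway T y x, (β z : Set V)) \ (⋃ z ∈ compAway T x y, (β z : Set V))

/-- `G` has a subgraph isomorphic to some subdivision of the complete graph `K_μ`:
equivalently, there are `μ` branch vertices joined by pairwise internally disjoint
paths of nonzero length. -/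
def HasKSubdivision {V : Type*} (μ : ℕ) (G : SimpleGraph V) : Prop :=
  ∃ b : Fin μ → V, Function.Injective b ∧
    ∃ P : ∀ i j : Fin μ, i < j → G.Walk (b i) (b j),
      (∀ i j (h : i < j), (P i j h).IsPath) ∧
      (∀ i j (h : i < j), ∀ m : Fin μ, b m ∈ (P i j h).support → m = i ∨ m = j) ∧
      (∀ i j (h : i < j), ∀ k l (h' : k < l), (i, j) ≠ (k, l) →
        ∀ v : V, v ∈ (P i j h).support → v ∈ (P k l h').support →
          (v = b i ∨ v = b j) ∧ (v = b k ∨ v = b l))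



section Aux
open SimpleGraph

variable {V ι : Type*} {G : SimpleGraph V} {T : SimpleGraph ι} {β : ι → Finset V} {x y y' : ι}

lemma tree_edge_mem (hT : T.IsTree) (hxy : T.Adj x y) (w : T.Walk x y) : s(x,y) ∈ w.edges :=
  ((SimpleGraph.isBridge_iff_adj_and_forall_walk_mem_edges.mp
    ((SimpleGraph.isAcyclic_iff_forall_edge_isBridge.mp hT.IsAcyclic)
      (show s(x,y) ∈ T.edgeSet from hxy))) w)

lemma start_mem_compAway (hxy : T.Adj x y) : x ∈ compAway T x y :=
  ⟨.nil, by simp [hxy.ne']⟩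

lemma compAway_disj (hT : T.IsTree) (hxy : T.Adj x y) {z : ι}
    (h1 : z ∈ compAway T y x) (h2 : z ∈ compAway T x y) : False := by
  obtain ⟨w1, hw1⟩ := h1
  obtain ⟨w2, hw2⟩ := h2
  have hb := tree_edge_mem hT hxy (w2.append w1.reverse)
  rw [SimpleGraph.Walk.edges_append, List.mem_append] at hb
  rcases hb with h | h
  · exact hw2 (w2.snd_mem_support_of_mem_edges h)
  · rw [SimpleGraph.Walk.edges_reverse, List.mem_reverse] at h
    exact hw1 (w1.fst_mem_support_of_mem_edges h)

lemma compAway_total (hT : T.IsTree) (hxy : T.Adj x y) (z : ι) :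
    z ∈ compAway T y x ∨ z ∈ compAway T x y := by
  classical
  obtain ⟨p0⟩ := hT.isConnected y z
  let p : T.Path y z := p0.toPath
  by_cases hx : x ∈ (p : T.Walk y z).support
  · right
    refine ⟨(p : T.Walk y z).dropUntil x hx, fun hy => ?_⟩
    have hnd : ((p : T.Walk y z).support).Nodup := p.2.support_nodup
    rw [← SimpleGraph.Walk.take_spec (p : T.Walk y z) hx,
      SimpleGraph.Walk.support_append] at hnd
    have hy1 : y ∈ ((p : T.Walk y z).takeUntil x hx).support :=
      SimpleGraph.Walk.start_mem_support _
    have hy2 : y ∈ ((p : T.Walk y z).dropUntil x hx).support.tail := by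
      have := SimpleGraph.Walk.support_eq_cons ((p : T.Walk y z).dropUntil x hx)
      rw [this] at hy
      rcases List.mem_cons.mp hy with h | h
      · exact absurd h hxy.ne'
      · exact h
    exact (List.disjoint_of_nodup_append hnd) hy1 hy2
  · exact Or.inl ⟨p, hx⟩

lemma compAway_sib (hT : T.IsTree) (hxy : T.Adj x y) (hxy' : T.Adj x y') (hne : y ≠ y')
    {z : ι} (h1 : z ∈ compAway T y x) (h2 : z ∈ compAway T y' x) : False := by
  obtain ⟨w1, hw1⟩ := h1
  obtain ⟨w2, hw2⟩ := h2
  have hb := tree_edge_mem hT hxy.symm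
    ((w1.append w2.reverse).append (SimpleGraph.Walk.cons hxy'.symm SimpleGraph.Walk.nil))
  rw [SimpleGraph.Walk.edges_append, List.mem_append, SimpleGraph.Walk.edges_append,
    List.mem_append] at hb
  rcases hb with (h | h) | h
  · exact hw1 (w1.snd_mem_support_of_mem_edges h)
  · rw [SimpleGraph.Walk.edges_reverse, List.mem_reverse] at h
    exact hw2 (w2.snd_mem_support_of_mem_edges h)
  · simp only [SimpleGraph.Walk.edges_cons, SimpleGraph.Walk.edges_nil,
      List.mem_singleton] at h
    rw [Sym2.eq_iff] at h
    rcases h with ⟨h1, _⟩ | ⟨h1, _⟩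
    · exact hne h1
    · exact hxy.ne' h1

lemma cross_support (hT : T.IsTree) (hxy : T.Adj x y) {i z' : ι}
    (hi : i ∈ compAway T y x) (hz : z' ∈ compAway T x y) (w : T.Walk i z') :
    x ∈ w.support ∧ y ∈ w.support := by
  obtain ⟨wi, hwi⟩ := hi
  obtain ⟨wz, hwz⟩ := hz
  constructor
  · by_contra hx
    refine compAway_disj hT hxy (z := z') ⟨wi.append w, ?_⟩ ⟨wz, hwz⟩
    rw [SimpleGraph.Walk.mem_support_append_iff]
    rintro (h | h)
    · exact hwi h
    · exact hx h
  · by_contra hy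
    refine compAway_disj hT hxy (z := i) ⟨wi, hwi⟩ ⟨wz.append w.reverse, ?_⟩
    rw [SimpleGraph.Walk.mem_support_append_iff]
    rintro (h | h)
    · exact hwz h
    · rw [SimpleGraph.Walk.support_reverse, List.mem_reverse] at h
      exact hy h

lemma mem_adhesion (hdec : IsTreeDecomp G T β) (hxy : T.Adj x y) {u : V} {i z' : ι}
    (hi : i ∈ compAway T y x) (hz : z' ∈ compAway T x y)
    (hui : u ∈ β i) (huz : u ∈ β z') : u ∈ β x ∧ u ∈ β y := by
  obtain ⟨w, hw⟩ := (hdec.bags_connected u).2 i hui z' huz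
  obtain ⟨hx, hy⟩ := cross_support hdec.tree hxy hi hz w
  exact ⟨hw x hx, hw y hy⟩

end Aux

def sideD {V ι : Type*} (T : SimpleGraph ι) (β : ι → Finset V) (x y : ι) : Set V :=
  (⋃ z ∈ compAway T y x, (β z : Set V)) \ (⋃ z ∈ compAway T x y, (β z : Set V))

def sideC {V ι : Type*} (G : SimpleGraph V) (T : SimpleGraph ι) (β : ι → Finset V)
    (x y : ι) (v0 : V) : Set V :=
  {p | ∃ w : G.Walk v0 p, ∀ q ∈ w.support, q ∈ sideD T β x y}

section Aux2
open SimpleGraph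

variable {V ι : Type*} {G : SimpleGraph V} {T : SimpleGraph ι} {β : ι → Finset V}
  {x y y' : ι} {v0 : V}

lemma sideC_subset : sideC G T β x y v0 ⊆ sideD T β x y :=
  fun p ⟨w, hw⟩ => hw p w.end_mem_support

lemma sideC_connectedIn (hv0 : v0 ∈ sideD T β x y) : ConnectedIn G (sideC G T β x y v0) := by
  classical
  constructor
  · refine ⟨v0, SimpleGraph.Walk.nil, fun q hq => ?_⟩
    simp only [SimpleGraph.Walk.support_nil, List.mem_singleton] at hq
    subst hq; exact hv0
  · rintro a ⟨wa, ha⟩ b ⟨wb, hb⟩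
    refine ⟨wa.reverse.append wb, fun q hq => ?_⟩
    rw [SimpleGraph.Walk.mem_support_append_iff] at hq
    rcases hq with h | h
    · rw [SimpleGraph.Walk.support_reverse, List.mem_reverse] at h
      exact ⟨wa.takeUntil q h, fun r hr => ha r (SimpleGraph.Walk.support_takeUntil_subset _ h hr)⟩
    · exact ⟨wb.takeUntil q h, fun r hr => hb r (SimpleGraph.Walk.support_takeUntil_subset _ h hr)⟩

lemma sideD_not_bagx (hxy : T.Adj x y) {p : V} (hp : p ∈ sideD T β x y) :
    p ∉ (β x : Set V) := fun h => hp.2 (Set.mem_biUnion (start_mem_compAway hxy) h)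

lemma bags_in_side (hT : T.IsTree) (hxy : T.Adj x y) {p : V} (hp : p ∈ sideD T β x y)
    {i : ι} (hi : p ∈ β i) : i ∈ compAway T y x := by
  rcases compAway_total hT hxy i with h | h
  · exact h
  · exact absurd (Set.mem_biUnion h hi) hp.2

lemma sideD_edge (hdec : IsTreeDecomp G T β) (hxy : T.Adj x y) {p u : V}
    (hp : p ∈ sideD T β x y) (h : G.Adj p u) (hu : u ∉ sideD T β x y) :
    u ∈ β x ∧ u ∈ β y := by
  obtain ⟨i, hpi, hui⟩ := hdec.edges_covered p u h
  have hiy := bags_in_side hdec.tree hxy hp hpi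
  have huY : u ∈ ⋃ z ∈ compAway T y x, (β z : Set V) := Set.mem_biUnion hiy hui
  have huX : u ∈ ⋃ z ∈ compAway T x y, (β z : Set V) := by
    by_contra h'
    exact hu ⟨huY, h'⟩
  obtain ⟨z', hz', huz⟩ : ∃ z' ∈ compAway T x y, u ∈ β z' := by
    simpa using huX
  exact mem_adhesion hdec hxy hiy hz' hui huz

lemma sideD_sib_disj (hT : T.IsTree) (hxy : T.Adj x y) (hxy' : T.Adj x y') (hne : y ≠ y')
    {p : V} (h1 : p ∈ sideD T β x y) (h2 : p ∈ sideD T β x y') : False := by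
  obtain ⟨z, hz, hpz⟩ : ∃ z ∈ compAway T y x, p ∈ β z := by simpa using h1.1
  exact compAway_sib hT hxy hxy' hne hz (bags_in_side hT hxy' h2 hpz)

lemma sideD_sib_noedge (hdec : IsTreeDecomp G T β) (hxy : T.Adj x y) (hxy' : T.Adj x y')
    (hne : y ≠ y') {p q : V} (h1 : p ∈ sideD T β x y) (h2 : q ∈ sideD T β x y')
    (h : G.Adj p q) : False := by
  obtain ⟨i, hpi, hqi⟩ := hdec.edges_covered p q h
  exact compAway_sib hdec.tree hxy hxy' hne (bags_in_side hdec.tree hxy h1 hpi)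
    (bags_in_side hdec.tree hxy' h2 hqi)

end Aux2

open SimpleGraph

/-- If `(T, β)` is a tight tree decomposition of `G` and some torso has an
induced `H`-model whose branch sets over the side `A` of the bipartition of `H` are
singletons, then `G` has an induced minor isomorphic to `H`. -/
theorem statement17 {W V ι : Type} [Fintype W] [Fintype V] [Fintype ι]
    (H : SimpleGraph W) (A B : Set W)
    (hcover : ∀ w : W, w ∈ A ∨ w ∈ B) (hdisj : ∀ w : W, ¬ (w ∈ A ∧ w ∈ B))
    (hAstable : ∀ a ∈ A, ∀ a' ∈ A, ¬ H.Adj a a')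
    (hBstable : ∀ b ∈ B, ∀ b' ∈ B, ¬ H.Adj b b')
    (G : SimpleGraph V) (T : SimpleGraph ι) (β : ι → Finset V)
    (hdec : IsTreeDecomp G T β) (htight : Tight G T β) (x : ι)
    (X : W → Set {v : V // v ∈ β x})
    (hmodel : IsInducedModel H (torso G T β x) X)
    (hA : ∀ a ∈ A, (X a).ncard = 1) :
    InducedMinor H G := by
  classical
  obtain ⟨hconnX, hdisjX, hadjX, hindX⟩ := hmodel
  by_cases hW : Nonempty W
  case neg =>
    haveI := not_nonempty_iff.mp hW
    exact ⟨fun _ => ∅, fun w => isEmptyElim w, fun w => isEmptyElim w,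
      fun w => isEmptyElim w, fun w => isEmptyElim w⟩
  obtain ⟨w₀⟩ := hW
  obtain ⟨u₀, hu₀⟩ := (hconnX w₀).1
  haveI : Nonempty V := ⟨u₀.1⟩
  -- tightness data
  have ht : ∀ y, T.Adj x y → ∃ v₀, v₀ ∈ sideD T β x y ∧
      ∀ u : V, u ∈ β x → u ∈ β y → ∃ c, G.Adj u c ∧ c ∈ sideC G T β x y v₀ := by
    intro y hy
    obtain ⟨v₀, hv₀, hprop⟩ := htight x y hy
    refine ⟨v₀, hv₀, fun u hux huy => ?_⟩
    obtain ⟨c, hc, w, hw⟩ := hprop u hux huy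
    exact ⟨c, hc, w, hw⟩
  choose! v0 hv0 hv0' using ht
  set C : ι → Set V := fun y => sideC G T β x y (v0 y) with hCdef
  have hCconn : ∀ y, T.Adj x y → ConnectedIn G (C y) := fun y hy => sideC_connectedIn (hv0 y hy)
  have hCsub : ∀ y, C y ⊆ sideD T β x y := fun y => sideC_subset
  have hCadj : ∀ y, T.Adj x y → ∀ u : V, u ∈ β x → u ∈ β y → ∃ c ∈ C y, G.Adj u c := by
    intro y hy u hux huy
    obtain ⟨c, hc1, hc2⟩ := hv0' y hy u hux huy
    exact ⟨c, hc2, hc1⟩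
  set Att : W → ι → Prop := fun w y => w ∈ B ∧ T.Adj x y ∧ ∃ u ∈ X w, (u : V) ∈ β y
    with hAttdef
  set X' : W → Set V := fun w => (Subtype.val '' X w) ∪ ⋃ y ∈ {y | Att w y}, C y with hX'def
  have hmemXV : ∀ w (u : {v // v ∈ β x}), u ∈ X w → (u : V) ∈ X' w :=
    fun w u hu => Set.mem_union_left _ ⟨u, hu, rfl⟩
  have hmemC : ∀ w y, Att w y → ∀ p ∈ C y, p ∈ X' w :=
    fun w y hy p hp => Set.mem_union_right _ (Set.mem_biUnion hy hp)
  have hX'cases : ∀ w p, p ∈ X' w →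
      (∃ u : {v // v ∈ β x}, u ∈ X w ∧ (u : V) = p) ∨ ∃ y, Att w y ∧ p ∈ C y := by
    intro w p hp
    rcases (Set.mem_union _ _ _).mp hp with h | h
    · obtain ⟨u, hu, he⟩ := h
      exact Or.inl ⟨u, hu, he⟩
    · rw [Set.mem_iUnion₂] at h
      obtain ⟨y, hy, hpy⟩ := h
      exact Or.inr ⟨y, hy, hpy⟩
  have hMeet : ∀ w w' y, T.Adj x y → w ≠ w' →
      (∃ u ∈ X w, (u : V) ∈ β y) → (∃ u ∈ X w', (u : V) ∈ β y) → H.Adj w w' := by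
    rintro w w' y hxy hne ⟨u, hu, huy⟩ ⟨u', hu', hu'y⟩
    have hneu : u ≠ u' := fun h =>
      Set.disjoint_left.mp (hdisjX w w' hne) hu (h ▸ hu')
    by_contra hnadj
    exact hindX w w' hne hnadj u hu u' hu' ⟨hneu, Or.inr ⟨y, hxy, huy, hu'y⟩⟩
  have hAttU : ∀ w w' y, Att w y → Att w' y → w = w' := by
    rintro w w' y ⟨hwB, hxy, hu⟩ ⟨hw'B, _, hu'⟩
    by_contra hne
    exact hBstable w hwB w' hw'B (hMeet w w' y hxy hne hu hu')
  have hEdgeWalk : ∀ w (u v : {v // v ∈ β x}), u ∈ X w → v ∈ X w →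
      (torso G T β x).Adj u v →
      ∃ wk : G.Walk (u : V) (v : V), ∀ q ∈ wk.support, q ∈ X' w := by
    rintro w u v hu hv ⟨hne, hGadj | ⟨y, hxy, huy, hvy⟩⟩
    · refine ⟨.cons hGadj .nil, fun q hq => ?_⟩
      simp only [Walk.support_cons, Walk.support_nil, List.mem_cons,
        List.mem_singleton, List.not_mem_nil, or_false] at hq
      rcases hq with rfl | rfl
      · exact hmemXV w u hu
      · exact hmemXV w v hv
    · have hwB : w ∈ B := by
        rcases hcover w with hwA | hwB
        · obtain ⟨s, hs⟩ := Set.ncard_eq_one.mp (hA w hwA)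
          rw [hs, Set.mem_singleton_iff] at hu hv
          exact absurd (hu.trans hv.symm) hne
        · exact hwB
      have hAtt : Att w y := ⟨hwB, hxy, u, hu, huy⟩
      obtain ⟨cu, hcuC, hcu⟩ := hCadj y hxy (u : V) u.2 huy
      obtain ⟨cv, hcvC, hcv⟩ := hCadj y hxy (v : V) v.2 hvy
      obtain ⟨wk, hwk⟩ := (hCconn y hxy).2 cu hcuC cv hcvC
      refine ⟨.cons hcu (wk.append (.cons hcv.symm .nil)), fun q hq => ?_⟩
      simp only [Walk.support_cons, List.mem_cons] at hq
      rcases hq with rfl | hq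
      · exact hmemXV w u hu
      · rcases (Walk.mem_support_append_iff _ _).mp hq with h | h
        · exact hmemC w y hAtt q (hwk q h)
        · simp only [Walk.support_cons, Walk.support_nil, List.mem_cons,
            List.mem_singleton, List.not_mem_nil, or_false] at h
          rcases h with rfl | rfl
          · exact hmemC w y hAtt q hcvC
          · exact hmemXV w v hv
  have hLift : ∀ w (u v : {v // v ∈ β x}) (p : (torso G T β x).Walk u v),
      (∀ q ∈ p.support, q ∈ X w) →
      ∃ wk : G.Walk (u : V) (v : V), ∀ q ∈ wk.support, q ∈ X' w := by
    intro w u v p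
    induction p with
    | nil =>
      intro h
      refine ⟨.nil, fun q hq => ?_⟩
      simp only [Walk.support_nil, List.mem_singleton] at hq
      subst hq
      exact hmemXV w _ (h _ (Walk.start_mem_support _))
    | @cons a b c hadj p ih =>
      intro hs
      obtain ⟨wk1, h1⟩ := hEdgeWalk w a b (hs a (Walk.start_mem_support _))
        (hs b (by rw [Walk.support_cons]; exact List.mem_cons_of_mem _ (Walk.start_mem_support _))) hadj
      obtain ⟨wk2, h2⟩ := ih (fun q hq => hs q (by
        rw [Walk.support_cons]; exact List.mem_cons_of_mem _ hq))
      refine ⟨wk1.append wk2, fun q hq => ?_⟩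
      rcases (Walk.mem_support_append_iff _ _).mp hq with h | h
      · exact h1 q h
      · exact h2 q h
  have hCtoX : ∀ w y, Att w y → ∀ p ∈ C y, ∃ u : {v // v ∈ β x}, u ∈ X w ∧
      ∃ wk : G.Walk p (u : V), ∀ q ∈ wk.support, q ∈ X' w := by
    rintro w y ⟨hwB, hxy, u, hu, huy⟩ p hp
    obtain ⟨c, hcC, hc⟩ := hCadj y hxy (u : V) u.2 huy
    obtain ⟨wk, hwk⟩ := (hCconn y hxy).2 p hp c hcC
    refine ⟨u, hu, wk.append (.cons hc.symm .nil), fun q hq => ?_⟩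
    rcases (Walk.mem_support_append_iff _ _).mp hq with h | h
    · exact hmemC w y ⟨hwB, hxy, u, hu, huy⟩ q (hwk q h)
    · simp only [Walk.support_cons, Walk.support_nil, List.mem_cons,
        List.mem_singleton, List.not_mem_nil, or_false] at h
      rcases h with rfl | rfl
      · exact hmemC w y ⟨hwB, hxy, u, hu, huy⟩ q hcC
      · exact hmemXV w u hu
  refine ⟨X', ?_, ?_, ?_, ?_⟩
  · -- connectivity
    intro w
    obtain ⟨uw, huw⟩ := (hconnX w).1
    refine ⟨⟨uw, hmemXV w uw huw⟩, ?_⟩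
    have key : ∀ p ∈ X' w, ∃ u : {v // v ∈ β x}, u ∈ X w ∧
        ∃ wk : G.Walk p (u : V), ∀ q ∈ wk.support, q ∈ X' w := by
      intro p hp
      rcases hX'cases w p hp with ⟨u, hu, rfl⟩ | ⟨y, hAtt, hpC⟩
      · refine ⟨u, hu, .nil, fun q hq => ?_⟩
        simp only [Walk.support_nil, List.mem_singleton] at hq
        subst hq
        exact hmemXV w u hu
      · exact hCtoX w y hAtt p hpC
    intro a ha b hb
    obtain ⟨ua, hua, wa, hwa⟩ := key a ha
    obtain ⟨ub, hub, wb, hwb⟩ := key b hb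
    obtain ⟨pt, hpt⟩ := (hconnX w).2 ua hua ub hub
    obtain ⟨wm, hwm⟩ := hLift w ua ub pt hpt
    refine ⟨wa.append (wm.append wb.reverse), fun q hq => ?_⟩
    rcases (Walk.mem_support_append_iff _ _).mp hq with h | h
    · exact hwa q h
    · rcases (Walk.mem_support_append_iff _ _).mp h with h' | h'
      · exact hwm q h'
      · rw [Walk.support_reverse, List.mem_reverse] at h'
        exact hwb q h'
  · -- disjointness
    intro w w' hne
    rw [Set.disjoint_left]
    intro p hp hp'
    rcases hX'cases w p hp with ⟨u, hu, hue⟩ | ⟨y, hAy, hpC⟩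
    · rcases hX'cases w' p hp' with ⟨u', hu', hue'⟩ | ⟨y', hAy', hpC'⟩
      · have : u = u' := Subtype.val_injective (hue.trans hue'.symm)
        exact Set.disjoint_left.mp (hdisjX w w' hne) hu (this ▸ hu')
      · exact sideD_not_bagx hAy'.2.1 (hCsub y' hpC') (hue ▸ u.2)
    · rcases hX'cases w' p hp' with ⟨u', hu', hue'⟩ | ⟨y', hAy', hpC'⟩
      · exact sideD_not_bagx hAy.2.1 (hCsub y hpC) (hue' ▸ u'.2)
      · by_cases hyy : y = y'
        · exact hne (hAttU w w' y hAy (hyy ▸ hAy'))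
        · exact sideD_sib_disj hdec.tree hAy.2.1 hAy'.2.1 hyy (hCsub y hpC) (hCsub y' hpC')
  · -- adjacency
    intro w w' hadj
    obtain ⟨u, hu, u', hu', htadj⟩ := hadjX w w' hadj
    obtain ⟨hneu, hGadj | ⟨y, hxy, huy, hu'y⟩⟩ := htadj
    · exact ⟨↑u, hmemXV w u hu, ↑u', hmemXV w' u' hu', hGadj⟩
    · rcases hcover w' with hw'A | hw'B
      · rcases hcover w with hwA | hwB
        · exact absurd hadj (hAstable w hwA w' hw'A)
        · have hAtt : Att w y := ⟨hwB, hxy, u, hu, huy⟩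
          obtain ⟨c, hcC, hc⟩ := hCadj y hxy (u' : V) u'.2 hu'y
          exact ⟨c, hmemC w y hAtt c hcC, ↑u', hmemXV w' u' hu', hc.symm⟩
      · have hAtt : Att w' y := ⟨hw'B, hxy, u', hu', hu'y⟩
        obtain ⟨c, hcC, hc⟩ := hCadj y hxy (u : V) u.2 huy
        exact ⟨↑u, hmemXV w u hu, c, hmemC w' y hAtt c hcC, hc⟩
  · -- non-adjacency
    intro w w' hne hnadj p hp q hq hGadj
    rcases hX'cases w p hp with ⟨u, hu, hue⟩ | ⟨y, hAy, hpC⟩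
    · rcases hX'cases w' q hq with ⟨u', hu', hue'⟩ | ⟨y', hAy', hqC⟩
      · subst hue
        subst hue'
        have hneu : u ≠ u' := fun h =>
          Set.disjoint_left.mp (hdisjX w w' hne) hu (h ▸ hu')
        exact hindX w w' hne hnadj u hu u' hu' ⟨hneu, Or.inl hGadj⟩
      · subst hue
        have hpD : (u : V) ∉ sideD T β x y' := fun h => sideD_not_bagx hAy'.2.1 h u.2
        have hmem := sideD_edge hdec hAy'.2.1 (hCsub y' hqC) hGadj.symm hpD
        obtain ⟨hw'B, hxy', u2, hu2, hu2y⟩ := hAy'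
        exact hnadj (hMeet w w' y' hxy' hne ⟨u, hu, hmem.2⟩ ⟨u2, hu2, hu2y⟩)
    · rcases hX'cases w' q hq with ⟨u', hu', hue'⟩ | ⟨y', hAy', hqC⟩
      · subst hue'
        have hqD : (u' : V) ∉ sideD T β x y := fun h => sideD_not_bagx hAy.2.1 h u'.2
        have hmem := sideD_edge hdec hAy.2.1 (hCsub y hpC) hGadj hqD
        obtain ⟨hwB, hxy, u2, hu2, hu2y⟩ := hAy
        exact hnadj (hMeet w w' y hxy hne ⟨u2, hu2, hu2y⟩ ⟨u', hu', hmem.2⟩)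
      · by_cases hyy : y = y'
        · exact hne (hAttU w w' y hAy (hyy ▸ hAy'))
        · exact sideD_sib_noedge hdec hAy.2.1 hAy'.2.1 hyy (hCsub y hpC) (hCsub y' hqC) hGadj
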